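/- Let λ, μ be partitions contained in the m×n rectangle with μ ⊂ λ and |μ| = |λ| - 1, say μ_i = λ_i - 1 for a unique index i and μ_j = λ_j for j ≠ i. Then h_λ · h_{μ'} / (h_{λ'} · h_μ) = (m - i + λ_i)(n + i - λ_i), where ν' denotes the complement of ν in the m×n rectangle and h_ν is the product of hook lengths of ν. -/

import Mathlib

/-- The complement of a partition in the `m × n` rectangle: `λ'_i = n - λ_{m+1-i}`. -/
def rectComplement (m n : ℕ) (lam : Fin m → ℕ) : Fin m → ℕ :=
  fun i => n - lam i.rev

/-- The conjugate partition evaluated at (0-indexed) column `j`. -/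
def conjPart (m : ℕ) (lam : Fin m → ℕ) (j : ℕ) : ℕ :=
  (Finset.univ.filter (fun i : Fin m => j < lam i)).card

/-- The product of the hook lengths of a partition with at most `m` parts. -/
def hookProd (m : ℕ) (lam : Fin m → ℕ) : ℕ :=
  ∏ i : Fin m, ∏ j ∈ Finset.range (lam i), (lam i + conjPart m lam j - (i + j + 1))

namespace HookAux

open Finset Nat

variable {m n : ℕ}

def bnum (m : ℕ) (lam : Fin m → ℕ) (i : Fin m) : ℕ := lam i + (m - 1 - i)

def delta (m : ℕ) (lam : Fin m → ℕ) : ℕ :=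
  ∏ i : Fin m, ∏ k ∈ Finset.Ioi i, (bnum m lam i - bnum m lam k)

lemma conj_ge {lam : Fin m → ℕ} (hanti : Antitone lam) {j : ℕ} {a : Fin m}
    (h : j < lam a) : (a : ℕ) + 1 ≤ conjPart m lam j := by
  have hsub : Finset.Iic a ⊆ Finset.univ.filter (fun b : Fin m => j < lam b) := by
    intro b hb
    simp only [Finset.mem_Iic] at hb
    simp only [Finset.mem_filter, Finset.mem_univ, true_and]
    exact lt_of_lt_of_le h (hanti hb)
  have := Finset.card_le_card hsub
  rwa [Fin.card_Iic] at this

lemma conj_le {lam : Fin m → ℕ} (hanti : Antitone lam) {j : ℕ} {a : Fin m}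
    (h : lam a ≤ j) : conjPart m lam j ≤ (a : ℕ) := by
  have hsub : Finset.univ.filter (fun b : Fin m => j < lam b) ⊆ Finset.Iio a := by
    intro b hb
    simp only [Finset.mem_filter, Finset.mem_univ, true_and] at hb
    simp only [Finset.mem_Iio]
    by_contra hba
    exact absurd (lt_of_le_of_lt h hb) (not_lt.2 (hanti (le_of_not_gt hba)))
  have := Finset.card_le_card hsub
  rwa [Fin.card_Iio] at this

lemma conj_anti (lam : Fin m → ℕ) {j j' : ℕ} (h : j ≤ j') :
    conjPart m lam j' ≤ conjPart m lam j :=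
  Finset.card_le_card (fun b hb => by
    simp only [Finset.mem_filter, Finset.mem_univ, true_and] at hb ⊢
    omega)

lemma conj_le_m (lam : Fin m → ℕ) (j : ℕ) : conjPart m lam j ≤ m := by
  simpa [conjPart] using Finset.card_le_card (Finset.filter_subset _ (Finset.univ : Finset (Fin m)))

lemma bnum_strictAnti {lam : Fin m → ℕ} (hanti : Antitone lam) {i k : Fin m}
    (h : i < k) : bnum m lam k < bnum m lam i := by
  have h1 : lam k ≤ lam i := hanti h.le
  have h2 : (k : ℕ) < m := k.isLt
  have h3 : (i : ℕ) < (k : ℕ) := h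
  unfold bnum; omega

lemma row_key {lam : Fin m → ℕ} (hanti : Antitone lam) (i : Fin m) :
    (∏ j ∈ Finset.range (lam i), (lam i + conjPart m lam j - ((i : ℕ) + j + 1))) *
      (∏ k ∈ Finset.Ioi i, (bnum m lam i - bnum m lam k)) = (bnum m lam i)! := by
  classical
  set B := bnum m lam i with hB
  set g : ℕ → ℕ := fun j => lam i + conjPart m lam j - ((i : ℕ) + j + 1) with hg
  set t : Fin m → ℕ := fun k => B - bnum m lam k with ht
  have him : (i : ℕ) < m := i.isLt
  -- basic bounds on g
  have hconj_ge : ∀ j ∈ Finset.range (lam i), (i : ℕ) + 1 ≤ conjPart m lam j := by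
    intro j hj
    exact conj_ge hanti (Finset.mem_range.1 hj)
  have hgpos : ∀ j ∈ Finset.range (lam i), 1 ≤ g j ∧ g j ≤ B := by
    intro j hj
    have h1 := hconj_ge j hj
    have h2 := conj_le_m lam j
    have h3 := Finset.mem_range.1 hj
    simp only [hg, hB, bnum]
    omega
  -- injectivity of g
  have hgmono : ∀ j ∈ Finset.range (lam i), ∀ j' ∈ Finset.range (lam i),
      j < j' → g j' < g j := by
    intro j hj j' hj' hlt
    have h1 := hconj_ge j hj
    have h2 := hconj_ge j' hj'
    have h3 := conj_anti lam hlt.le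
    have h4 := Finset.mem_range.1 hj
    have h5 := Finset.mem_range.1 hj'
    simp only [hg]
    omega
  have hginj : Set.InjOn g (Finset.range (lam i)) := by
    intro j hj j' hj' hgj
    rcases lt_trichotomy j j' with h | h | h
    · exact absurd hgj (by have := hgmono j hj j' hj' h; omega)
    · exact h
    · exact absurd hgj (by have := hgmono j' hj' j hj h; omega)
  -- injectivity of t
  have htmono : ∀ k ∈ Finset.Ioi i, ∀ k' ∈ Finset.Ioi i, k < k' → t k < t k' := by
    intro k hk k' hk' hlt
    have h1 := bnum_strictAnti hanti (Finset.mem_Ioi.1 hk)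
    have h2 := bnum_strictAnti hanti (Finset.mem_Ioi.1 hk')
    have h3 := bnum_strictAnti hanti hlt
    simp only [ht, hB] at h1 h2 ⊢
    omega
  have htinj : Set.InjOn t (Finset.Ioi i) := by
    intro k hk k' hk' htk
    rcases lt_trichotomy k k' with h | h | h
    · exact absurd htk (by have := htmono k hk k' hk' h; omega)
    · exact h
    · exact absurd htk (by have := htmono k' hk' k hk h; omega)
  have htmem : ∀ k ∈ Finset.Ioi i, 1 ≤ t k ∧ t k ≤ B := by
    intro k hk
    have h1 := bnum_strictAnti hanti (Finset.mem_Ioi.1 hk)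
    simp only [ht]
    omega
  -- disjointness
  have hdisj : Disjoint ((Finset.range (lam i)).image g) ((Finset.Ioi i).image t) := by
    rw [Finset.disjoint_left]
    rintro v hv hv'
    obtain ⟨j, hj, rfl⟩ := Finset.mem_image.1 hv
    obtain ⟨k, hk, hkeq⟩ := Finset.mem_image.1 hv'
    have hik : i < k := Finset.mem_Ioi.1 hk
    have hkm : (k : ℕ) < m := k.isLt
    have hji : j < lam i := Finset.mem_range.1 hj
    have hki : lam k ≤ lam i := hanti hik.le
    have hbk := bnum_strictAnti hanti hik
    simp only [hg, ht, hB, bnum] at hkeq hbk ⊢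
    by_cases hcase : j < lam k
    · have := conj_ge hanti hcase
      omega
    · have := conj_le hanti (le_of_not_gt hcase)
      omega
  -- the union is Icc 1 B
  have hcardg : ((Finset.range (lam i)).image g).card = lam i := by
    rw [Finset.card_image_of_injOn hginj, Finset.card_range]
  have hcardt : ((Finset.Ioi i).image t).card = m - 1 - i := by
    rw [Finset.card_image_of_injOn htinj, Fin.card_Ioi]
  have hunion : (Finset.range (lam i)).image g ∪ (Finset.Ioi i).image t =
      Finset.Icc 1 B := by
    apply Finset.eq_of_subset_of_card_le
    · intro v hv
      rcases Finset.mem_union.1 hv with hv | hv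
      · obtain ⟨j, hj, rfl⟩ := Finset.mem_image.1 hv
        have := hgpos j hj
        exact Finset.mem_Icc.2 this
      · obtain ⟨k, hk, rfl⟩ := Finset.mem_image.1 hv
        have := htmem k hk
        exact Finset.mem_Icc.2 this
    · rw [Finset.card_union_of_disjoint hdisj, hcardg, hcardt, Nat.card_Icc]
      simp only [hB, bnum]
      omega
  have := congrArg (fun s => ∏ x ∈ s, x) hunion
  rw [Finset.prod_union hdisj, Finset.prod_image hginj, Finset.prod_image htinj] at this
  rw [show Finset.Icc 1 B = Finset.Ico 1 (B + 1) by rw [Finset.Ico_add_one_right_eq_Icc],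
    Finset.prod_Ico_id_eq_factorial] at this
  exact this

lemma hook_delta {lam : Fin m → ℕ} (hanti : Antitone lam) :
    hookProd m lam * delta m lam = ∏ i : Fin m, (bnum m lam i)! := by
  rw [hookProd, delta, ← Finset.prod_mul_distrib]
  exact Finset.prod_congr rfl (fun i _ => row_key hanti i)

lemma comp_anti {lam : Fin m → ℕ} (hanti : Antitone lam) :
    Antitone (rectComplement m n lam) := by
  intro j j' h
  have : lam j.rev ≤ lam j'.rev := hanti (Fin.rev_le_rev.2 h)
  simp only [rectComplement]
  omega

lemma bnum_comp {lam : Fin m → ℕ} (hle : ∀ j, lam j ≤ n) (j : Fin m) :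
    bnum m (rectComplement m n lam) j = (m + n - 1) - bnum m lam j.rev := by
  have h1 := hle j.rev
  have h2 : (j : ℕ) < m := j.isLt
  have h3 : (j.rev : ℕ) = m - 1 - j := by
    simp [Fin.val_rev]; omega
  simp only [bnum, rectComplement, h3]
  omega

lemma prod_fact_comp {lam : Fin m → ℕ} (hle : ∀ j, lam j ≤ n) :
    (∏ j : Fin m, (bnum m (rectComplement m n lam) j)!) =
      ∏ j : Fin m, ((m + n - 1) - bnum m lam j)! := by
  calc (∏ j : Fin m, (bnum m (rectComplement m n lam) j)!)
      = ∏ j : Fin m, ((m + n - 1) - bnum m lam j.rev)! :=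
        Finset.prod_congr rfl (fun j _ => by rw [bnum_comp hle])
    _ = ∏ j : Fin m, ((m + n - 1) - bnum m lam j)! :=
        Fintype.prod_equiv Fin.revPerm _ _ (fun j => rfl)

lemma delta_comp {lam : Fin m → ℕ} (hanti : Antitone lam) (hle : ∀ j, lam j ≤ n) :
    delta m (rectComplement m n lam) = delta m lam := by
  classical
  have hfac : ∀ j k : Fin m, j < k →
      bnum m (rectComplement m n lam) j - bnum m (rectComplement m n lam) k =
        bnum m lam k.rev - bnum m lam j.rev := by
    intro j k hjk
    rw [bnum_comp hle, bnum_comp hle]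
    have h1 : bnum m lam j.rev ≤ m + n - 1 := by
      have := hle j.rev; have : lam j.rev ≤ n := this
      have h2 : (j.rev : ℕ) < m := j.rev.isLt
      simp only [bnum]; omega
    have h2 : bnum m lam k.rev ≤ m + n - 1 := by
      have := hle k.rev
      have h3 : (k.rev : ℕ) < m := k.rev.isLt
      simp only [bnum]; omega
    omega
  rw [delta, delta, Finset.prod_sigma', Finset.prod_sigma']
  refine Finset.prod_nbij' (fun p => ⟨p.2.rev, p.1.rev⟩) (fun p => ⟨p.2.rev, p.1.rev⟩)
    ?_ ?_ ?_ ?_ ?_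
  · rintro ⟨j, k⟩ h
    simp only [Finset.mem_sigma, Finset.mem_univ, Finset.mem_Ioi, true_and] at h ⊢
    exact Fin.rev_lt_rev.2 h
  · rintro ⟨j, k⟩ h
    simp only [Finset.mem_sigma, Finset.mem_univ, Finset.mem_Ioi, true_and] at h ⊢
    exact Fin.rev_lt_rev.2 h
  · rintro ⟨j, k⟩ _; simp
  · rintro ⟨j, k⟩ _; simp
  · rintro ⟨j, k⟩ h
    simp only [Finset.mem_sigma, Finset.mem_univ, Finset.mem_Ioi, true_and] at h
    exact (hfac j k h).trans rfl

lemma delta_pos {lam : Fin m → ℕ} (hanti : Antitone lam) : 0 < delta m lam := by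
  rw [delta]
  apply Finset.prod_pos
  intro i _
  apply Finset.prod_pos
  intro k hk
  have := bnum_strictAnti hanti (Finset.mem_Ioi.1 hk)
  omega

end HookAux

open HookAux Nat in
/-- Let `λ, μ` be partitions contained in the `m × n` rectangle with `μ ⊂ λ` and
`|μ| = |λ| - 1`, i.e. `μ_i = λ_i - 1` for a unique (1-indexed) row `i` and
`μ_j = λ_j` otherwise.  Then `h_λ h_{μ'} / (h_{λ'} h_μ) = (m - i + λ_i)(n + i - λ_i)`,
stated multiplicatively (here `i` is 0-indexed, so `1-indexed i = i + 1`). -/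
theorem hookProd_ratio_remove_box (m n : ℕ) (lam mu : Fin m → ℕ) (i : Fin m)
    (hlanti : Antitone lam) (hlle : ∀ j, lam j ≤ n)
    (hmanti : Antitone mu) (hmle : ∀ j, mu j ≤ n)
    (hi : mu i + 1 = lam i) (hoff : ∀ j, j ≠ i → mu j = lam j) :
    hookProd m lam * hookProd m (rectComplement m n mu)
      = ((m - ((i : ℕ) + 1) + lam i) * (n + ((i : ℕ) + 1) - lam i)) *
        (hookProd m (rectComplement m n lam) * hookProd m mu) := by
  classical
  have him : (i : ℕ) < m := i.isLt
  have hbmu : bnum m mu i + 1 = bnum m lam i := by simp only [bnum]; omega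
  have hbeq : ∀ j, j ≠ i → bnum m mu j = bnum m lam j := by
    intro j hj; simp only [bnum, hoff j hj]
  have hbleM : ∀ j : Fin m, bnum m lam j ≤ m + n - 1 := by
    intro j
    have h1 := hlle j
    have h2 : (j : ℕ) < m := j.isLt
    simp only [bnum]; omega
  have hbmuleM : ∀ j : Fin m, bnum m mu j ≤ m + n - 1 := by
    intro j
    have h1 := hmle j
    have h2 : (j : ℕ) < m := j.isLt
    simp only [bnum]; omega
  -- factorial product relations
  have hfl : (∏ j : Fin m, (bnum m lam j)!) =
      bnum m lam i * ∏ j : Fin m, (bnum m mu j)! := by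
    rw [Fintype.prod_eq_mul_prod_compl i (fun j => (bnum m lam j)!),
      Fintype.prod_eq_mul_prod_compl i (fun j => (bnum m mu j)!)]
    have h1 : (bnum m lam i)! = bnum m lam i * (bnum m mu i)! := by
      rw [← hbmu, Nat.factorial_succ]
    have h2 : (∏ j ∈ ({i}ᶜ : Finset (Fin m)), (bnum m lam j)!) =
        ∏ j ∈ ({i}ᶜ : Finset (Fin m)), (bnum m mu j)! := by
      refine Finset.prod_congr rfl (fun j hj => ?_)
      rw [hbeq j (by simpa using hj)]
    rw [h1, h2, mul_assoc]
  have hfm : (∏ j : Fin m, ((m + n - 1) - bnum m mu j)!) =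
      ((m + n - 1) - bnum m lam i + 1) *
        ∏ j : Fin m, ((m + n - 1) - bnum m lam j)! := by
    rw [Fintype.prod_eq_mul_prod_compl i (fun j => ((m + n - 1) - bnum m mu j)!),
      Fintype.prod_eq_mul_prod_compl i (fun j => ((m + n - 1) - bnum m lam j)!)]
    have h0 : (m + n - 1) - bnum m mu i = ((m + n - 1) - bnum m lam i) + 1 := by
      have := hbleM i; omega
    have h1 : ((m + n - 1) - bnum m mu i)! =
        ((m + n - 1) - bnum m lam i + 1) * ((m + n - 1) - bnum m lam i)! := by
      rw [h0, Nat.factorial_succ]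
    have h2 : (∏ j ∈ ({i}ᶜ : Finset (Fin m)), ((m + n - 1) - bnum m mu j)!) =
        ∏ j ∈ ({i}ᶜ : Finset (Fin m)), ((m + n - 1) - bnum m lam j)! := by
      refine Finset.prod_congr rfl (fun j hj => ?_)
      rw [hbeq j (by simpa using hj)]
    rw [h1, h2, mul_assoc]
  -- the constant
  have hC : (m - ((i : ℕ) + 1) + lam i) * (n + ((i : ℕ) + 1) - lam i) =
      bnum m lam i * ((m + n - 1) - bnum m lam i + 1) := by
    have h1 := hlle i
    simp only [bnum]
    have h2 : m - ((i : ℕ) + 1) + lam i = lam i + (m - 1 - i) := by omega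
    have h3 : n + ((i : ℕ) + 1) - lam i = (m + n - 1) - (lam i + (m - 1 - i)) + 1 := by
      omega
    rw [h2, h3]
  -- hook-delta relations
  have A1 := hook_delta hlanti
  have A2 := hook_delta hmanti
  have A3 : hookProd m (rectComplement m n lam) * delta m lam =
      ∏ j : Fin m, ((m + n - 1) - bnum m lam j)! := by
    have := hook_delta (comp_anti (n := n) hlanti)
    rwa [delta_comp hlanti hlle, prod_fact_comp hlle] at this
  have A4 : hookProd m (rectComplement m n mu) * delta m mu =
      ∏ j : Fin m, ((m + n - 1) - bnum m mu j)! := by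
    have := hook_delta (comp_anti (n := n) hmanti)
    rwa [delta_comp hmanti hmle, prod_fact_comp hmle] at this
  have hDpos : 0 < delta m lam * delta m mu :=
    Nat.mul_pos (delta_pos hlanti) (delta_pos hmanti)
  refine Nat.eq_of_mul_eq_mul_right hDpos ?_
  calc hookProd m lam * hookProd m (rectComplement m n mu) * (delta m lam * delta m mu)
      = (hookProd m lam * delta m lam) *
        (hookProd m (rectComplement m n mu) * delta m mu) := by ring
    _ = (∏ j : Fin m, (bnum m lam j)!) *
        (∏ j : Fin m, ((m + n - 1) - bnum m mu j)!) := by rw [A1, A4]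
    _ = (bnum m lam i * ((m + n - 1) - bnum m lam i + 1)) *
        ((∏ j : Fin m, ((m + n - 1) - bnum m lam j)!) *
          (∏ j : Fin m, (bnum m mu j)!)) := by rw [hfl, hfm]; ring
    _ = ((m - ((i : ℕ) + 1) + lam i) * (n + ((i : ℕ) + 1) - lam i)) *
        ((hookProd m (rectComplement m n lam) * delta m lam) *
          (hookProd m mu * delta m mu)) := by rw [hC, A3, A2]
    _ = ((m - ((i : ℕ) + 1) + lam i) * (n + ((i : ℕ) + 1) - lam i)) *
        (hookProd m (rectComplement m n lam) * hookProd m mu) *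
        (delta m lam * delta m mu) := by ring
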